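/- arXiv:2504.06790 — 4 statements merged into one kernel-verified Lean document; each statement's English description precedes it below -/
import Mathlib

section
/- For P ≥ 1, define Φ : ℂ^{P×P} → ℂ^{P×P} by [Φ(T)]_{i,k} = −T_{i,k} for i ≠ k and [Φ(T)]_{k,k} = Σ_{p=1}^{P} T_{p,k}, and define Ψ : ℂ^{P×P} → ℂ^{P×P} by [Ψ(Y)]_{i,k} = −Y_{i,k} for i ≠ k and [Ψ(Y)]_{k,k} = Σ_{p=1}^{P} Y_{p,k}. Then Ψ(Φ(T)) = T and Φ(Ψ(Y)) = Y for all T, Y ∈ ℂ^{P×P}; that is, Φ and Ψ are mutually inverse bijections, so the P² tunable admittance components can be adjusted to make the network admittance matrix equal to any prescribed complex matrix. -/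
open Matrix

/-- `Φ` maps the tunable admittance components `T` of the MiLAC circuit to the resulting
network admittance matrix: off-diagonal entries `−T i k`, diagonal entries `∑ p, T p k`. -/
noncomputable def componentsToAdmittance (P : ℕ) (T : Matrix (Fin P) (Fin P) ℂ) :
    Matrix (Fin P) (Fin P) ℂ :=
  Matrix.of fun i k => if i = k then ∑ p, T p k else -T i k

/-- `Ψ` maps a prescribed admittance matrix `Y` to the tunable admittance components
realizing it: off-diagonal `−Y i k`, diagonal `∑ p, Y p k`. -/
noncomputable def admittanceToComponents (P : ℕ) (Y : Matrix (Fin P) (Fin P) ℂ) :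
    Matrix (Fin P) (Fin P) ℂ :=
  Matrix.of fun i k => if i = k then ∑ p, Y p k else -Y i k

lemma milac_involutive (P : ℕ) (T : Matrix (Fin P) (Fin P) ℂ) :
    componentsToAdmittance P (componentsToAdmittance P T) = T := by
  ext i k
  simp only [componentsToAdmittance, Matrix.of_apply]
  by_cases h : i = k
  · subst h
    simp only [if_pos rfl]
    rw [← Finset.add_sum_erase _ _ (Finset.mem_univ i)]
    simp only [if_pos rfl]
    have : ∑ p ∈ Finset.univ.erase i,
        (if p = i then ∑ q, T q i else -T p i) = ∑ p ∈ Finset.univ.erase i, -T p i := by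
      apply Finset.sum_congr rfl
      intro p hp
      rw [if_neg (Finset.ne_of_mem_erase hp)]
    rw [this, ← Finset.add_sum_erase _ (fun p => T p i) (Finset.mem_univ i)]
    simp
  · simp [if_neg h]

lemma milac_eq (P : ℕ) : admittanceToComponents P = componentsToAdmittance P := rfl

/-- `Φ` and `Ψ` are mutually inverse bijections: the `P²` tunable admittance components can be
adjusted so that the network admittance matrix equals any prescribed complex matrix. -/
theorem milac_components_admittance_bijection (P : ℕ) (hP : 1 ≤ P) :
    (∀ T : Matrix (Fin P) (Fin P) ℂ,
      admittanceToComponents P (componentsToAdmittance P T) = T) ∧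
    (∀ Y : Matrix (Fin P) (Fin P) ℂ,
      componentsToAdmittance P (admittanceToComponents P Y) = Y) ∧
    Function.Bijective (componentsToAdmittance P) ∧
    Function.Bijective (admittanceToComponents P) := by
  have h := milac_involutive P
  rw [milac_eq]
  refine ⟨h, h, ?_, ?_⟩ <;>
    exact Function.Involutive.bijective h
end

section
/- Let H ∈ ℂ^{Y×X} and let C_x ∈ ℂ^{X×X} and C_n ∈ ℂ^{Y×Y} be Hermitian positive definite. Consider the block matrix P_LMMSE = [[C_n, H], [Hᴴ, −C_x⁻¹]] ∈ ℂ^{(Y+X)×(Y+X)} with blocks P₁₁ = C_n, P₁₂ = H, P₂₁ = Hᴴ, P₂₂ = −C_x⁻¹. Then P_LMMSE is invertible, its block P₁₁ is invertible, and the MiLAC output matrix satisfies (P₂₁·P₁₁⁻¹·P₁₂ − P₂₂)⁻¹·P₂₁·P₁₁⁻¹ = (Hᴴ·C_n⁻¹·H + C_x⁻¹)⁻¹·Hᴴ·C_n⁻¹, i.e., a MiLAC configured with P = P_LMMSE outputs the LMMSE estimator of x from the observation y = H·x + n applied at its input. -/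
open Matrix ComplexOrder

/-- A MiLAC configured with `P_LMMSE = [[C_n, H], [Hᴴ, −C_x⁻¹]]` outputs the LMMSE estimator:
`P_LMMSE` and its block `P₁₁ = C_n` are invertible, and
`(P₂₁·P₁₁⁻¹·P₁₂ − P₂₂)⁻¹·P₂₁·P₁₁⁻¹ = (Hᴴ·C_n⁻¹·H + C_x⁻¹)⁻¹·Hᴴ·C_n⁻¹`. -/
theorem milac_computes_lmmse_form1 (X Y : ℕ) (hX : 1 ≤ X) (hY : 1 ≤ Y)
    (H : Matrix (Fin Y) (Fin X) ℂ)
    (Cx : Matrix (Fin X) (Fin X) ℂ) (Cn : Matrix (Fin Y) (Fin Y) ℂ)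
    (hCx : Cx.PosDef) (hCn : Cn.PosDef) :
    IsUnit (Matrix.fromBlocks Cn H Hᴴ (-Cx⁻¹)) ∧ IsUnit Cn ∧
    (Hᴴ * Cn⁻¹ * H - -Cx⁻¹)⁻¹ * Hᴴ * Cn⁻¹ = (Hᴴ * Cn⁻¹ * H + Cx⁻¹)⁻¹ * Hᴴ * Cn⁻¹ := by
  have hCnU : IsUnit Cn := hCn.isUnit
  letI := hCnU.invertible
  have hS : (Hᴴ * Cn⁻¹ * H + Cx⁻¹).PosDef :=
    Matrix.PosDef.posSemidef_add (hCn.inv.posSemidef.conjTranspose_mul_mul_same H) hCx.inv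
  refine ⟨?_, hCnU, by rw [sub_neg_eq_add]⟩
  have hSch : IsUnit (-Cx⁻¹ - Hᴴ * ⅟Cn * H) := by
    rw [invOf_eq_nonsing_inv]
    have : -Cx⁻¹ - Hᴴ * Cn⁻¹ * H = -(Hᴴ * Cn⁻¹ * H + Cx⁻¹) := by abel
    rw [this]
    exact hS.isUnit.neg
  letI := hSch.invertible
  letI : Invertible (-Cx⁻¹ - Hᴴ * ⅟Cn * H) := hSch.invertible
  letI := Matrix.fromBlocks₁₁Invertible Cn H Hᴴ (-Cx⁻¹)
  exact isUnit_of_invertible _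
end

section
/- Let Y ∈ ℂ^{P×P}, let Y₀ be a positive real number, and let u, v ∈ ℂ^P satisfy (Y/Y₀ + I_P)·v = u. Define the real 2P×2P matrix B̂ in blocks by B̂ = [[Re(Y) + Y₀·I_P, Im(Y) + Y₀·I_P], [−Im(Y) − Y₀·I_P, Re(Y) + Y₀·I_P]], where Re(Y) and Im(Y) denote the entrywise real and imaginary parts of Y. Then, viewing B̂ as a complex matrix, (i·B̂/Y₀ + I_{2P}) applied to the stacked vector (−i·v, v) ∈ ℂ^{2P} equals (u, i·u) ∈ ℂ^{2P}. Hence a MiLAC whose admittance matrix i·B̂ is purely imaginary (lossless) reproduces the input-output behavior of the MiLAC with complex admittance matrix Y. -/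
open Matrix

set_option maxRecDepth 10000

/-- A lossless MiLAC with purely imaginary admittance matrix `i·B̂`, where
`B̂ = [[Re Y + Y₀ I, Im Y + Y₀ I], [−Im Y − Y₀ I, Re Y + Y₀ I]]` is real, reproduces the
input-output behavior of the MiLAC with complex admittance matrix `Y`: if
`(Y/Y₀ + I)·v = u`, then `(i·B̂/Y₀ + I)` applied to `(−i·v, v)` equals `(u, i·u)`. -/
theorem milac_lossless_implementation (P : ℕ) (Y : Matrix (Fin P) (Fin P) ℂ)
    (Y₀ : ℝ) (hY₀ : 0 < Y₀) (u v : Fin P → ℂ)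
    (hv : ((Y₀ : ℂ)⁻¹ • Y + 1).mulVec v = u) :
    ((Complex.I * (Y₀ : ℂ)⁻¹) •
        ((Matrix.fromBlocks
            (Y.map Complex.re + Y₀ • 1) (Y.map Complex.im + Y₀ • 1)
            (-(Y.map Complex.im) - Y₀ • 1) (Y.map Complex.re + Y₀ • 1)).map
          ((↑) : ℝ → ℂ)) + 1).mulVec
      (Sum.elim (fun k => -Complex.I * v k) v) =
    Sum.elim u (fun k => Complex.I * u k) := by
  funext x
  have hY₀' : (Y₀ : ℂ) ≠ 0 := by exact_mod_cast hY₀.ne'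
  cases x with
  | inl k =>
    have h := congrFun hv k
    simp only [Matrix.mulVec, dotProduct, Fintype.sum_sum_type, Matrix.add_apply,
      Matrix.smul_apply, Matrix.map_apply, Matrix.fromBlocks_apply₁₁, Matrix.fromBlocks_apply₁₂,
      Matrix.one_apply, Sum.elim_inl, Sum.elim_inr, Matrix.neg_apply, Matrix.sub_apply,
      Pi.smul_apply, smul_eq_mul, Sum.inl.injEq, reduceCtorEq, if_false, add_zero] at h ⊢
    rw [← Finset.sum_add_distrib, ← h]
    refine Finset.sum_congr rfl fun x _ => ?_
    have hY : Y k x = ((Y k x).re : ℂ) + (Y k x).im * Complex.I := (Complex.re_add_im _).symm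
    push_cast [apply_ite ((↑) : ℝ → ℂ)]
    set d : ℂ := (if k = x then (1:ℂ) else 0) with hd
    linear_combination (-(((Y₀:ℂ))⁻¹ * ((Y k x).re : ℂ) * v x + d * v x)) * Complex.I_sq -
      (↑Y₀)⁻¹ * v x * hY + (Complex.I - Complex.I^2) * d * v x * (mul_inv_cancel₀ hY₀')
  | inr k =>
    have h := congrFun hv k
    simp only [Matrix.mulVec, dotProduct, Fintype.sum_sum_type, Matrix.add_apply,
      Matrix.smul_apply, Matrix.map_apply, Matrix.fromBlocks_apply₂₁, Matrix.fromBlocks_apply₂₂,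
      Matrix.one_apply, Sum.elim_inl, Sum.elim_inr, Matrix.neg_apply, Matrix.sub_apply,
      Pi.smul_apply, smul_eq_mul, Sum.inr.injEq, reduceCtorEq, if_false, add_zero] at h ⊢
    rw [← h, Finset.mul_sum, ← Finset.sum_add_distrib]
    refine Finset.sum_congr rfl fun x _ => ?_
    have hY : Y k x = ((Y k x).re : ℂ) + (Y k x).im * Complex.I := (Complex.re_add_im _).symm
    push_cast [apply_ite ((↑) : ℝ → ℂ)]
    set d : ℂ := (if k = x then (1:ℂ) else 0) with hd
    linear_combination (-(((Y₀:ℂ))⁻¹ * ((Y k x).im : ℂ) * v x + (((Y₀:ℂ))⁻¹ * ((Y k x).re : ℂ) * v x + d * v x) * Complex.I)) * Complex.I_sq -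
      Complex.I * (↑Y₀)⁻¹ * v x * hY + d * v x * (Complex.I + Complex.I^2) * (mul_inv_cancel₀ hY₀') +
      (d * v x * (Complex.I + 1) + Complex.I * (↑Y₀)⁻¹ * ((Y k x).re : ℂ) * v x + (↑Y₀)⁻¹ * ((Y k x).im : ℂ) * v x) * Complex.I_sq
end

section
/- Let N, M ≥ 1, P = N + M, and Y₀ > 0 real. Let Y ∈ ℂ^{P×P} be partitioned into blocks Y₁₁ ∈ ℂ^{N×N}, Y₁₂ ∈ ℂ^{N×M}, Y₂₁ ∈ ℂ^{M×N}, Y₂₂ ∈ ℂ^{M×M}. Define the real 2P×2P matrix B̄ = [[B̄₁₁, B̄₁₂], [B̄₂₁, B̄₂₂]] where B̄₁₁ = [[Re(Y₁₁) + Y₀·I_N, Im(Y₁₁) + Y₀·I_N], [−Im(Y₁₁) − Y₀·I_N, Re(Y₁₁) + Y₀·I_N]], B̄₂₂ = [[Re(Y₂₂) + Y₀·I_M, Im(Y₂₂) + Y₀·I_M], [−Im(Y₂₂) − Y₀·I_M, Re(Y₂₂) + Y₀·I_M]], and B̄₁₂ = [[Re(Y₁₂), Im(Y₁₂)], [−Im(Y₁₂),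 Re(Y₁₂)]], B̄₂₁ = [[Re(Y₂₁), Im(Y₂₁)], [−Im(Y₂₁), Re(Y₂₁)]]. Let u ∈ ℂ^N, ũ = (u, 0_M) ∈ ℂ^P, and suppose v ∈ ℂ^P satisfies (Y/Y₀ + I_P)·v = ũ, with v = (v₁, v₂), v₁ ∈ ℂ^N, v₂ ∈ ℂ^M. Then (i·B̄/Y₀ + I_{2P}) applied to the stacked vector (−i·v₁, v₁, −i·v₂, v₂) ∈ ℂ^{2P} equals (u, i·u, 0, 0) ∈ ℂ^{2P}. -/
open Matrix

lemma pair_sub {m : ℕ} (f g a w : Fin m → ℂ) (C : ℂ)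
    (h : ∀ x, g x - f x = C * (a x * w x)) :
    (∑ x, g x) - ∑ x, f x = C * ∑ x, a x * w x := by
  rw [Finset.mul_sum, ← Finset.sum_sub_distrib]
  exact Finset.sum_congr rfl fun x _ => h x

lemma pair_add {m : ℕ} (f g a w : Fin m → ℂ) (C : ℂ)
    (h : ∀ x, f x + g x = C * (a x * w x)) :
    (∑ x, f x) + ∑ x, g x = C * ∑ x, a x * w x := by
  rw [Finset.mul_sum, ← Finset.sum_add_distrib]
  exact Finset.sum_congr rfl fun x _ => h x

lemma pair_sub_diag {m : ℕ} (f g a w : Fin m → ℂ) (C D : ℂ) (j : Fin m)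
    (h : ∀ x, g x - f x = C * (a x * w x) + (if j = x then D * w x else 0)) :
    (∑ x, g x) - ∑ x, f x = C * ∑ x, a x * w x + D * w j := by
  rw [Finset.mul_sum, ← Finset.sum_sub_distrib, Finset.sum_congr rfl fun x _ => h x,
    Finset.sum_add_distrib, Finset.sum_ite_eq]
  simp

/-- A lossless MiLAC with input on its first `2N` ports, whose real susceptance matrix `B̄`
is built blockwise from the blocks of `Y`, reproduces the behavior of the MiLAC with complex
admittance matrix `Y = [[Y₁₁, Y₁₂], [Y₂₁, Y₂₂]]` and input `ũ = (u, 0)`: if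
`(Y/Y₀ + I)·(v₁, v₂) = (u, 0)`, then `(i·B̄/Y₀ + I)` applied to the stacked vector
`(−i·v₁, v₁, −i·v₂, v₂)` equals `(u, i·u, 0, 0)`. -/
theorem milac_lossless_implementation_some_ports (N M : ℕ) (hN : 1 ≤ N) (hM : 1 ≤ M)
    (Y₀ : ℝ) (hY₀ : 0 < Y₀)
    (Y11 : Matrix (Fin N) (Fin N) ℂ) (Y12 : Matrix (Fin N) (Fin M) ℂ)
    (Y21 : Matrix (Fin M) (Fin N) ℂ) (Y22 : Matrix (Fin M) (Fin M) ℂ)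
    (u v₁ : Fin N → ℂ) (v₂ : Fin M → ℂ)
    (hv : ((Y₀ : ℂ)⁻¹ • Matrix.fromBlocks Y11 Y12 Y21 Y22 + 1).mulVec (Sum.elim v₁ v₂) =
      Sum.elim u 0) :
    ((Complex.I * (Y₀ : ℂ)⁻¹) •
        ((Matrix.fromBlocks
            (Matrix.fromBlocks (Y11.map Complex.re + Y₀ • 1) (Y11.map Complex.im + Y₀ • 1)
              (-(Y11.map Complex.im) - Y₀ • 1) (Y11.map Complex.re + Y₀ • 1))
            (Matrix.fromBlocks (Y12.map Complex.re) (Y12.map Complex.im)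
              (-(Y12.map Complex.im)) (Y12.map Complex.re))
            (Matrix.fromBlocks (Y21.map Complex.re) (Y21.map Complex.im)
              (-(Y21.map Complex.im)) (Y21.map Complex.re))
            (Matrix.fromBlocks (Y22.map Complex.re + Y₀ • 1) (Y22.map Complex.im + Y₀ • 1)
              (-(Y22.map Complex.im) - Y₀ • 1) (Y22.map Complex.re + Y₀ • 1))).map
          ((↑) : ℝ → ℂ)) + 1).mulVec
      (Sum.elim (Sum.elim (fun k => -Complex.I * v₁ k) v₁)
        (Sum.elim (fun k => -Complex.I * v₂ k) v₂)) =
    Sum.elim (Sum.elim u (fun k => Complex.I * u k)) 0 := by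
  have hc : ((Y₀ : ℂ))⁻¹ * (Y₀ : ℂ) = 1 :=
    inv_mul_cancel₀ (by exact_mod_cast hY₀.ne')
  have h1 : ∀ j : Fin N, (Y₀ : ℂ)⁻¹ * (∑ k, Y11 j k * v₁ k
      + ∑ l, Y12 j l * v₂ l) + v₁ j = u j := by
    intro j
    have h0 := congrFun hv (Sum.inl j)
    simpa [Matrix.mulVec, Matrix.fromBlocks, dotProduct, Fintype.sum_sum_type,
      Matrix.one_apply, add_mul, ite_mul, zero_mul, Finset.sum_add_distrib,
      Finset.sum_ite_eq, mul_assoc, ← Finset.mul_sum] using h0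
  have h2 : ∀ j : Fin M, (Y₀ : ℂ)⁻¹ * (∑ k, Y21 j k * v₁ k
      + ∑ l, Y22 j l * v₂ l) + v₂ j = 0 := by
    intro j
    have h0 := congrFun hv (Sum.inr j)
    simpa [Matrix.mulVec, Matrix.fromBlocks, dotProduct, Fintype.sum_sum_type,
      Matrix.one_apply, add_mul, ite_mul, zero_mul, Finset.sum_add_distrib,
      Finset.sum_ite_eq, mul_assoc, ← Finset.mul_sum] using h0
  funext x
  rcases x with (j | j) | (j | j) <;>
    simp [Matrix.mulVec, Matrix.fromBlocks, dotProduct, Fintype.sum_sum_type,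
      Matrix.one_apply, Matrix.map_apply, Finset.mul_sum]
  · -- row (inl, inl)
    have e11 := pair_sub_diag
      (fun x => (Complex.I * (↑Y₀)⁻¹ * (↑(Y11 j x).re + ↑(if j = x then Y₀ else 0))
          + if j = x then (1 : ℂ) else 0) * (Complex.I * v₁ x))
      (fun x => Complex.I * (↑Y₀)⁻¹ * (↑(Y11 j x).im + ↑(if j = x then Y₀ else 0)) * v₁ x)
      (fun x => Y11 j x) v₁ ((Y₀ : ℂ)⁻¹) 1 j (fun x => by
        by_cases hx : j = x
        · simp only [if_pos hx]
          push_cast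
          linear_combination ((↑Y₀)⁻¹ * v₁ x) * Complex.re_add_im (Y11 j x)
              + ((Complex.I - Complex.I ^ 2) * v₁ x) * hc
              + (-(↑Y₀)⁻¹ * ↑(Y11 j x).re * v₁ x - v₁ x) * Complex.I_sq
        · simp only [if_neg hx]
          push_cast
          linear_combination ((↑Y₀)⁻¹ * v₁ x) * Complex.re_add_im (Y11 j x)
              + (-(↑Y₀)⁻¹ * ↑(Y11 j x).re * v₁ x) * Complex.I_sq)
    have e12 := pair_sub
      (fun x => Complex.I * (↑Y₀)⁻¹ * ↑(Y12 j x).re * (Complex.I * v₂ x))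
      (fun x => Complex.I * (↑Y₀)⁻¹ * ↑(Y12 j x).im * v₂ x)
      (fun x => Y12 j x) v₂ ((Y₀ : ℂ)⁻¹) (fun x => by
        linear_combination ((↑Y₀)⁻¹ * v₂ x) * Complex.re_add_im (Y12 j x)
          + (-(↑Y₀)⁻¹ * ↑(Y12 j x).re * v₂ x) * Complex.I_sq)
    linear_combination e11 + e12 + h1 j
  · -- row (inl, inr)
    have e11 := pair_sub_diag
      (fun x => Complex.I * (↑Y₀)⁻¹ * (-↑(Y11 j x).im - ↑(if j = x then Y₀ else 0))
          * (Complex.I * v₁ x))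
      (fun x => (Complex.I * (↑Y₀)⁻¹ * (↑(Y11 j x).re + ↑(if j = x then Y₀ else 0))
          + if j = x then (1 : ℂ) else 0) * v₁ x)
      (fun x => Y11 j x) v₁ (Complex.I * (Y₀ : ℂ)⁻¹) Complex.I j (fun x => by
        by_cases hx : j = x
        · simp only [if_pos hx]
          push_cast
          linear_combination (Complex.I * (↑Y₀)⁻¹ * v₁ x) * Complex.re_add_im (Y11 j x)
              + ((Complex.I + Complex.I ^ 2) * v₁ x) * hc
              + (v₁ x) * Complex.I_sq
        · simp only [if_neg hx]
          push_cast
          linear_combination (Complex.I * (↑Y₀)⁻¹ * v₁ x) * Complex.re_add_im (Y11 j x))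
    have e12 := pair_add
      (fun x => Complex.I * (↑Y₀)⁻¹ * ↑(Y12 j x).im * (Complex.I * v₂ x))
      (fun x => Complex.I * (↑Y₀)⁻¹ * ↑(Y12 j x).re * v₂ x)
      (fun x => Y12 j x) v₂ (Complex.I * (Y₀ : ℂ)⁻¹) (fun x => by
        linear_combination (Complex.I * (↑Y₀)⁻¹ * v₂ x) * Complex.re_add_im (Y12 j x))
    linear_combination e11 + e12 + Complex.I * h1 j
  · -- row (inr, inl)
    have e21 := pair_sub
      (fun x => Complex.I * (↑Y₀)⁻¹ * ↑(Y21 j x).re * (Complex.I * v₁ x))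
      (fun x => Complex.I * (↑Y₀)⁻¹ * ↑(Y21 j x).im * v₁ x)
      (fun x => Y21 j x) v₁ ((Y₀ : ℂ)⁻¹) (fun x => by
        linear_combination ((↑Y₀)⁻¹ * v₁ x) * Complex.re_add_im (Y21 j x)
          + (-(↑Y₀)⁻¹ * ↑(Y21 j x).re * v₁ x) * Complex.I_sq)
    have e22 := pair_sub_diag
      (fun x => (Complex.I * (↑Y₀)⁻¹ * (↑(Y22 j x).re + ↑(if j = x then Y₀ else 0))
          + if j = x then (1 : ℂ) else 0) * (Complex.I * v₂ x))
      (fun x => Complex.I * (↑Y₀)⁻¹ * (↑(Y22 j x).im + ↑(if j = x then Y₀ else 0)) * v₂ x)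
      (fun x => Y22 j x) v₂ ((Y₀ : ℂ)⁻¹) 1 j (fun x => by
        by_cases hx : j = x
        · simp only [if_pos hx]
          push_cast
          linear_combination ((↑Y₀)⁻¹ * v₂ x) * Complex.re_add_im (Y22 j x)
              + ((Complex.I - Complex.I ^ 2) * v₂ x) * hc
              + (-(↑Y₀)⁻¹ * ↑(Y22 j x).re * v₂ x - v₂ x) * Complex.I_sq
        · simp only [if_neg hx]
          push_cast
          linear_combination ((↑Y₀)⁻¹ * v₂ x) * Complex.re_add_im (Y22 j x)
              + (-(↑Y₀)⁻¹ * ↑(Y22 j x).re * v₂ x) * Complex.I_sq)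
    linear_combination e21 + e22 + h2 j
  · -- row (inr, inr)
    have e21 := pair_add
      (fun x => Complex.I * (↑Y₀)⁻¹ * ↑(Y21 j x).im * (Complex.I * v₁ x))
      (fun x => Complex.I * (↑Y₀)⁻¹ * ↑(Y21 j x).re * v₁ x)
      (fun x => Y21 j x) v₁ (Complex.I * (Y₀ : ℂ)⁻¹) (fun x => by
        linear_combination (Complex.I * (↑Y₀)⁻¹ * v₁ x) * Complex.re_add_im (Y21 j x))
    have e22 := pair_sub_diag
      (fun x => Complex.I * (↑Y₀)⁻¹ * (-↑(Y22 j x).im - ↑(if j = x then Y₀ else 0))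
          * (Complex.I * v₂ x))
      (fun x => (Complex.I * (↑Y₀)⁻¹ * (↑(Y22 j x).re + ↑(if j = x then Y₀ else 0))
          + if j = x then (1 : ℂ) else 0) * v₂ x)
      (fun x => Y22 j x) v₂ (Complex.I * (Y₀ : ℂ)⁻¹) Complex.I j (fun x => by
        by_cases hx : j = x
        · simp only [if_pos hx]
          push_cast
          linear_combination (Complex.I * (↑Y₀)⁻¹ * v₂ x) * Complex.re_add_im (Y22 j x)
              + ((Complex.I + Complex.I ^ 2) * v₂ x) * hc
              + (v₂ x) * Complex.I_sq
        · simp only [if_neg hx]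
          push_cast
          linear_combination (Complex.I * (↑Y₀)⁻¹ * v₂ x) * Complex.re_add_im (Y22 j x))
    linear_combination e21 + e22 + Complex.I * h2 j
end
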